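/- Let G = (V,E) be a finite simple graph and k ≥ 1 an integer. Let 𝒫 be a family of 3-element subsets of the set of large-dense vertices of G such that each member of 𝒫 induces a P3 in G, any two distinct members of 𝒫 share at most one vertex, and every vertex of G belongs to at most k members of 𝒫. If |𝒫| > k², then there is no feasible solution for (G,k). -/

import Mathlib

open SimpleGraph

/-- The number of edges of `G` with both endpoints in the neighborhood of `v`. -/
noncomputable def rho {V : Type*} (G : SimpleGraph V) (v : V) : ℕ :=
  {e : Sym2 V | e ∈ G.edgeSet ∧ ∀ x ∈ e, G.Adj v x}.ncard

/-- `v` is large-sparse: `|N(v)| > 7k` and `ρ(v) ≤ |N(v)|(|N(v)|−1)/4`. -/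
def LargeSparse {V : Type*} (G : SimpleGraph V) (k : ℕ) (v : V) : Prop :=
  7 * k < (G.neighborSet v).ncard ∧
    4 * rho G v ≤ (G.neighborSet v).ncard * ((G.neighborSet v).ncard - 1)

/-- `v` is large-dense: `|N(v)| > 7k` and `ρ(v) > |N(v)|(|N(v)|−1)/4`. -/
def LargeDense {V : Type*} (G : SimpleGraph V) (k : ℕ) (v : V) : Prop :=
  7 * k < (G.neighborSet v).ncard ∧
    (G.neighborSet v).ncard * ((G.neighborSet v).ncard - 1) < 4 * rho G v

/-- The connected component `c` of `H` is a clique. -/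
def CompIsClique {W : Type*} (H : SimpleGraph W) (c : H.ConnectedComponent) : Prop :=
  H.IsClique c.supp

/-- The connected component `c` of `H` is a tree. -/
def CompIsTree {W : Type*} (H : SimpleGraph W) (c : H.ConnectedComponent) : Prop :=
  (H.induce c.supp).IsTree

/-- Every connected component of `H` is a clique or a tree. -/
def CliquesOrTrees {W : Type*} (H : SimpleGraph W) : Prop :=
  ∀ c : H.ConnectedComponent, CompIsClique H c ∨ CompIsTree H c

/-- `X` is a feasible solution for `(G, k)`: `|X| ≤ k` and every connected component of
`G − X` is a clique or a tree. -/
def IsFeasible {V : Type*} (G : SimpleGraph V) (k : ℕ) (X : Set V) : Prop :=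
  X.ncard ≤ k ∧ CliquesOrTrees (G.induce (Xᶜ : Set V))


lemma triangle_not_acyclic {W : Type*} {H : SimpleGraph W} {a b c : W}
    (hab : H.Adj a b) (hbc : H.Adj b c) (hca : H.Adj c a) : ¬ H.IsAcyclic := by
  intro h
  have h1 := hab.ne; have h2 := hbc.ne; have h3 := hca.ne
  refine h (Walk.cons hab (Walk.cons hbc (Walk.cons hca Walk.nil))) ?_
  rw [Walk.cons_isCycle_iff]
  constructor
  · simp only [Walk.isPath_def, Walk.support_cons, Walk.support_nil]
    simp only [List.nodup_cons, List.mem_cons, List.mem_singleton, List.not_mem_nil,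
      List.nodup_nil, List.not_mem_nil, or_false, and_true]
    tauto
  · simp only [Walk.edges_cons, Walk.edges_nil, List.mem_cons, List.not_mem_nil, or_false,
      Sym2.eq_iff]
    tauto

lemma count_le {α β : Type*} (s : Set α) (t : Set β) (hs : s.Finite) (ht : t.Finite)
    (R : α → β → Prop) (hcov : ∀ a ∈ s, ∃ b ∈ t, R a b) (n : ℕ)
    (hfib : ∀ b, {a ∈ s | R a b}.ncard ≤ n) : s.ncard ≤ t.ncard * n := by
  classical
  have hsub : hs.toFinset ⊆ ht.toFinset.biUnion
      (fun b => hs.toFinset.filter (fun a => R a b)) := by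
    intro a ha
    rw [Set.Finite.mem_toFinset] at ha
    obtain ⟨b, hb, hr⟩ := hcov a ha
    simp only [Finset.mem_biUnion, Set.Finite.mem_toFinset, Finset.mem_filter]
    exact ⟨b, hb, ha, hr⟩
  have h1 := Finset.card_le_card hsub
  have h2 : (ht.toFinset.biUnion (fun b => hs.toFinset.filter (fun a => R a b))).card
      ≤ ht.toFinset.card * n := by
    refine Finset.card_biUnion_le_card_mul _ _ _ fun b _ => ?_
    have he : ((hs.toFinset.filter (fun a => R a b)) : Set α) = {a ∈ s | R a b} := by
      ext a; simp [Set.Finite.mem_toFinset]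
    calc (hs.toFinset.filter (fun a => R a b)).card
        = {a ∈ s | R a b}.ncard := by rw [← he, Set.ncard_coe_finset]
      _ ≤ n := hfib b
  rw [Set.ncard_eq_toFinset_card s hs, Set.ncard_eq_toFinset_card t ht]
  exact le_trans h1 h2

lemma fiber_le {V : Type*} [Fintype V] (G : SimpleGraph V) (v x : V) :
    {e : Sym2 V | (e ∈ G.edgeSet ∧ ∀ y ∈ e, G.Adj v y) ∧ x ∈ e}.ncard
      ≤ (G.neighborSet v).ncard := by
  classical
  refine Set.ncard_le_ncard_of_injOn
    (fun e => if h : x ∈ e then Sym2.Mem.other h else x) ?_ ?_ (Set.toFinite _)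
  · rintro e ⟨⟨hE, hadj⟩, hx⟩
    simp only [dif_pos hx]
    exact hadj _ (Sym2.other_mem hx)
  · rintro e1 ⟨⟨_, _⟩, hx1⟩ e2 ⟨⟨_, _⟩, hx2⟩ h
    simp only [dif_pos hx1, dif_pos hx2] at h
    rw [← Sym2.other_spec hx1, ← Sym2.other_spec hx2, h]

lemma exists_edge_avoiding {V : Type*} [Fintype V] {G : SimpleGraph V} {k : ℕ} {v : V}
    (hv : LargeDense G k v) {X : Set V} (hX : X.ncard ≤ k) :
    ∃ a b : V, G.Adj a b ∧ G.Adj v a ∧ G.Adj v b ∧ a ∉ X ∧ b ∉ X := by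
  classical
  set n := (G.neighborSet v).ncard with hn
  set Ev := {e : Sym2 V | e ∈ G.edgeSet ∧ ∀ y ∈ e, G.Adj v y} with hEv
  set S := {e ∈ Ev | ∃ x ∈ X, x ∈ e} with hS
  have hScard : S.ncard ≤ X.ncard * n := by
    refine count_le S X (Set.toFinite _) (Set.toFinite _) (fun e x => x ∈ e)
      (fun e he => he.2) n (fun x => ?_)
    refine le_trans (Set.ncard_le_ncard ?_ (Set.toFinite _)) (fiber_le G v x)
    rintro e ⟨⟨hE, hadj⟩, hx⟩
    exact ⟨⟨hE.1, hE.2⟩, hx⟩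
  have hrho : rho G v = Ev.ncard := rfl
  have hlt : X.ncard * n < rho G v := by
    have h1 : 7 * k < n := hv.1
    have h2 : n * (n - 1) < 4 * rho G v := hv.2
    have h3 : 4 * (k * n) ≤ n * (n - 1) := by
      have : 4 * k ≤ n - 1 := by omega
      calc 4 * (k * n) = (4 * k) * n := by ring
        _ ≤ (n - 1) * n := Nat.mul_le_mul_right n this
        _ = n * (n - 1) := Nat.mul_comm _ _
    have : 4 * (X.ncard * n) ≤ 4 * (k * n) :=
      Nat.mul_le_mul_left 4 (Nat.mul_le_mul_right n hX)
    omega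
  have hne : ∃ e ∈ Ev, e ∉ S := by
    by_contra h
    push_neg at h
    have : Ev.ncard ≤ S.ncard := Set.ncard_le_ncard h (Set.toFinite _)
    omega
  obtain ⟨e, heE, heS⟩ := hne
  induction e using Sym2.ind with
  | _ a b =>
    have hab : G.Adj a b := heE.1
    have hva : G.Adj v a := heE.2 a (by simp)
    have hvb : G.Adj v b := heE.2 b (by simp)
    refine ⟨a, b, hab, hva, hvb, ?_, ?_⟩
    · intro haX; exact heS ⟨heE, a, haX, by simp⟩
    · intro hbX; exact heS ⟨heE, b, hbX, by simp⟩

/-- let `F` be a family of 3-element subsets of the large-dense vertices,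
each inducing a `P₃`, pairwise sharing at most one vertex, such that every vertex lies in
at most `k` members. If `|F| > k²`, then `(G,k)` has no feasible solution. -/
theorem stmt_9 {V : Type*} [Fintype V] (G : SimpleGraph V) (k : ℕ) (hk : 1 ≤ k)
    (F : Set (Set V))
    (hP3 : ∀ P ∈ F, ∃ v1 v2 v3 : V, P = {v1, v2, v3} ∧
      v1 ≠ v2 ∧ v2 ≠ v3 ∧ v1 ≠ v3 ∧
      LargeDense G k v1 ∧ LargeDense G k v2 ∧ LargeDense G k v3 ∧
      G.Adj v1 v2 ∧ G.Adj v2 v3 ∧ ¬ G.Adj v1 v3)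
    (hpair : ∀ P ∈ F, ∀ Q ∈ F, P ≠ Q → (P ∩ Q).ncard ≤ 1)
    (hdeg : ∀ v : V, {P ∈ F | v ∈ P}.ncard ≤ k)
    (hbig : k ^ 2 < F.ncard) :
    ¬ ∃ X : Set V, IsFeasible G k X := by
    classical
  rintro ⟨X, hXcard, hcomp⟩
  have hmeets : ∀ P ∈ F, ∃ x ∈ X, x ∈ P := by
    intro P hP
    by_contra hcon
    push_neg at hcon
    obtain ⟨v1, v2, v3, hPeq, h12, h23, h13, hd1, hd2, hd3, ha12, ha23, hna13⟩ := hP3 P hP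
    have hv1 : v1 ∈ (Xᶜ : Set V) := fun h => hcon v1 h (by simp [hPeq])
    have hv2 : v2 ∈ (Xᶜ : Set V) := fun h => hcon v2 h (by simp [hPeq])
    have hv3 : v3 ∈ (Xᶜ : Set V) := fun h => hcon v3 h (by simp [hPeq])
    set H := G.induce (Xᶜ : Set V) with hH
    set A : (Xᶜ : Set V) := ⟨v1, hv1⟩
    set B : (Xᶜ : Set V) := ⟨v2, hv2⟩
    set C : (Xᶜ : Set V) := ⟨v3, hv3⟩
    have hAB : H.Adj A B := by simp [hH, comap_adj, ha12]; exact ha12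
    have hBC : H.Adj B C := by simp [hH, comap_adj, ha23]; exact ha23
    set c := H.connectedComponentMk A with hc
    have hAc : A ∈ c.supp := rfl
    have hBc : B ∈ c.supp := by
      simp only [ConnectedComponent.mem_supp_iff, hc]
      exact ConnectedComponent.sound hAB.reachable.symm
    have hCc : C ∈ c.supp := by
      simp only [ConnectedComponent.mem_supp_iff, hc]
      exact ConnectedComponent.sound (hAB.reachable.trans hBC.reachable).symm
    rcases hcomp c with hcl | htr
    · have hAC : H.Adj A C := hcl hAc hCc (by simp [A, C]; exact h13)
      exact hna13 hAC
    · obtain ⟨a, b, hab, h1a, h1b, haX, hbX⟩ := exists_edge_avoiding hd1 hXcard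
      set A' : (Xᶜ : Set V) := ⟨a, haX⟩
      set B' : (Xᶜ : Set V) := ⟨b, hbX⟩
      have hAA' : H.Adj A A' := by simp [hH, comap_adj, h1a]; exact h1a
      have hAB' : H.Adj A B' := by simp [hH, comap_adj, h1b]; exact h1b
      have hA'B' : H.Adj A' B' := by simp [hH, comap_adj, hab]; exact hab
      have hA'c : A' ∈ c.supp := by
        simp only [ConnectedComponent.mem_supp_iff, hc]
        exact ConnectedComponent.sound hAA'.reachable.symm
      have hB'c : B' ∈ c.supp := by
        simp only [ConnectedComponent.mem_supp_iff, hc]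
        exact ConnectedComponent.sound hAB'.reachable.symm
      obtain ⟨_, hac⟩ := htr
      refine triangle_not_acyclic (a := ⟨A, hAc⟩) (b := ⟨A', hA'c⟩) (c := ⟨B', hB'c⟩)
        ?_ ?_ ?_ hac
      · exact hAA'
      · exact hA'B'
      · exact hAB'.symm
  have h1 : F.ncard ≤ X.ncard * k :=
    count_le F X (Set.toFinite _) (Set.toFinite _) (fun P x => x ∈ P) hmeets k
      (fun x => hdeg x)
  have h2 : F.ncard ≤ k * k := le_trans h1 (Nat.mul_le_mul_right k hXcard)
  have h3 : F.ncard ≤ k ^ 2 := by rw [pow_two]; exact h2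
  omega
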